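/- Let H be a compact metrizable topological group with normalized Haar probability measure ν, and let W ⊆ H be compact with W = closure(interior W). Then W is irredundant (for all ξ ∈ H, Wξ = W implies ξ = 1_H) if and only if W is Haar aperiodic (for all ξ ∈ H, ν(W Δ Wξ) = 0 implies ξ = 1_H). -/

import Mathlib

open MeasureTheory Filter Set Topology
open scoped symmDiff ENNReal

/-- Extended logarithm of an `ℝ≥0∞` value, with `eLog 0 = ⊥` and `eLog ⊤ = ⊤`. -/
noncomputable def eLog (x : ℝ≥0∞) : EReal :=
  if x = 0 then ⊥ else if x = ⊤ then ⊤ else ((Real.log x.toReal : ℝ) : EReal)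

/-- Maximal cardinality (in `ℝ≥0∞`) of an `ε`-separated subset of `S` w.r.t. `d`. -/
noncomputable def sepCount {Z : Type*} (S : Set Z) (d : Z → Z → ℝ) (ε : ℝ) : ℝ≥0∞ :=
  ⨆ (A : Finset Z) (_ : ↑A ⊆ S ∧ (A : Set Z).Pairwise fun z z' => ε ≤ d z z'), (A.card : ℝ≥0∞)

/-- The quantity `log Sep(S, d, ε) / (- log ε)`, as an extended real. -/
noncomputable def acRatio {Z : Type*} (S : Set Z) (d : Z → Z → ℝ) (ε : ℝ) : EReal :=
  eLog (sepCount S d ε) * (((-Real.log ε)⁻¹ : ℝ) : EReal)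

open Classical in
/-- `F` is a left Følner sequence in the group `G`. -/
def IsFolner {G : Type*} [Group G] (F : ℕ → Finset G) : Prop :=
  (∀ n, (F n).Nonempty) ∧ ∀ g : G,
    Filter.Tendsto
      (fun n => ((((F n).image fun h => g * h) ∆ F n).card : ℝ) / ((F n).card : ℝ))
      Filter.atTop (nhds 0)

/-- The Besicovitch pseudometric w.r.t. the sequence `F`. -/
noncomputable def besicovitchDist {G : Type*} (F : ℕ → Finset G) (x y : G → Bool) : ℝ :=
  Filter.limsup (fun n => (((F n).filter fun g => x g ≠ y g).card : ℝ) / ((F n).card : ℝ))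
    Filter.atTop

open Classical in
/-- The symbolic model set (as a 0-1 array) associated to a window `W ⊆ H`. -/
noncomputable def modelSet {G H : Type*} (τ : G → H) (W : Set H) : G → Bool :=
  fun g => decide (τ g ∈ W)

/-- Orbit closure of `x` under the left shift `(g·x)(h) = x(hg)`, in the product topology. -/
def shiftOrbitClosure {G : Type*} [Group G] (x : G → Bool) : Set (G → Bool) :=
  closure { y : G → Bool | ∃ g : G, y = fun h => x (h * g) }

/-- `Per(x, Γ, α)`, the set of `Γ`-periodic positions of `x` with value `α`. -/
def perA {G : Type*} [Group G] (x : G → Bool) (Γ : Subgroup G) (α : Bool) : Set G :=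
  { g : G | ∀ γ ∈ Γ, x (g * γ) = α }

/-- `Per(x, Γ) = Per(x,Γ,0) ∪ Per(x,Γ,1)`. -/
def perSet {G : Type*} [Group G] (x : G → Bool) (Γ : Subgroup G) : Set G :=
  perA x Γ false ∪ perA x Γ true

/-- `E` is a fundamental domain of `G/Γ`: `g ↦ gΓ` is a bijection from `E` onto `G/Γ`. -/
def IsFundDom {G : Type*} [Group G] (Γ : Subgroup G) (E : Finset G) : Prop :=
  ∀ g : G, ∃! d, d ∈ E ∧ g⁻¹ * d ∈ Γ

/-- The density `D(x,Γ)` of `Per(x,Γ)` computed in a fundamental domain `E`. -/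
noncomputable def perDensity {G : Type*} [Group G] (x : G → Bool) (Γ : Subgroup G)
    (E : Finset G) : ℝ :=
  (((E : Set G) ∩ perSet x Γ).ncard : ℝ) / (E.card : ℝ)

/-- The regularity constant `𝒟(x)`. -/
noncomputable def regConst {G : Type*} [Group G] (x : G → Bool) : ℝ :=
  sSup { r : ℝ | ∃ (Γ : Subgroup G) (E : Finset G),
    Γ.FiniteIndex ∧ IsFundDom Γ E ∧ r = perDensity x Γ E }

/-- For a proper window `W` in a compact metrizable group with normalized Haar
measure, `W` is irredundant if and only if `W` is Haar aperiodic. -/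
theorem stmt_1 {H : Type*} [Group H] [TopologicalSpace H] [IsTopologicalGroup H]
    [CompactSpace H] [TopologicalSpace.MetrizableSpace H] [MeasurableSpace H] [BorelSpace H]
    (ν : Measure H) [ν.IsHaarMeasure] [IsProbabilityMeasure ν]
    (W : Set H) (hWc : IsCompact W) (hW : W = closure (interior W)) :
    (∀ ξ : H, (fun w => w * ξ) '' W = W → ξ = 1) ↔
      (∀ ξ : H, ν (W ∆ ((fun w => w * ξ) '' W)) = 0 → ξ = 1) := by
  have hT2 : T2Space H := TopologicalSpace.t2Space_of_metrizableSpace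
  have hpos : ν.IsOpenPosMeasure := inferInstance
  constructor
  · intro hirr ξ hν
    apply hirr
    set f : H → H := fun w => w * ξ with hf
    have hfhomeo : IsClosed (f '' W) := (hWc.image (continuous_mul_right ξ)).isClosed
    -- interior W ⊆ f '' W
    have h1 : interior W ⊆ f '' W := by
      by_contra hcon
      obtain ⟨x, hxI, hxW⟩ := not_subset.mp hcon
      have hopen : IsOpen (interior W \ f '' W) := isOpen_interior.sdiff hfhomeo
      have hsub : interior W \ f '' W ⊆ W ∆ (f '' W) :=
        fun y hy => Or.inl ⟨interior_subset hy.1, hy.2⟩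
      have : ν (interior W \ f '' W) = 0 :=
        measure_mono_null hsub hν
      exact hopen.measure_ne_zero ν ⟨x, hxI, hxW⟩ this
    have hWsub : W ⊆ f '' W := by
      nth_rewrite 1 [hW]
      exact closure_minimal h1 hfhomeo
    -- f '' W ⊆ W
    have hint : interior (f '' W) = f '' interior W :=
      ((Homeomorph.mulRight ξ).image_interior W).symm
    have hclos : f '' W = closure (interior (f '' W)) := by
      rw [hint]
      have := (Homeomorph.mulRight ξ).image_closure (interior W)
      calc f '' W = f '' closure (interior W) := by rw [← hW]
        _ = closure (f '' interior W) := this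
    have h2 : interior (f '' W) ⊆ W := by
      by_contra hcon
      obtain ⟨x, hxI, hxW⟩ := not_subset.mp hcon
      have hopen : IsOpen (interior (f '' W) \ W) := isOpen_interior.sdiff hWc.isClosed
      have hsub : interior (f '' W) \ W ⊆ W ∆ (f '' W) :=
        fun y hy => Or.inr ⟨interior_subset hy.1, hy.2⟩
      have : ν (interior (f '' W) \ W) = 0 := measure_mono_null hsub hν
      exact hopen.measure_ne_zero ν ⟨x, hxI, hxW⟩ this
    have hsub2 : f '' W ⊆ W := by
      rw [hclos]
      exact closure_minimal h2 (hW ▸ isClosed_closure)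
    exact hsub2.antisymm hWsub
  · intro hap ξ hWeq
    exact hap ξ (by rw [hWeq, symmDiff_self]; simp)
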